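/- Deterministic relative-error bound for subsampled regression: under the setup of the structural bound, if additionally ||I_k − V_k^T S S^T V_k||_2 ≤ ε₁/2 with ε₁ ∈ (0,1), ||A P^⊥ S||_F ≤ c₁ ||A P^⊥||_F, and ||A P^⊥ (V_k − S S^T V_k)||_F ≤ c₂ ||A P^⊥||_F, then ||A − A S (B S)^† B||_F ≤ (1 + c₁ ε₁/√2 + c₂) ||A − A B^† B||_F. -/

import Mathlib

open Matrix Finset
open scoped Classical
noncomputable section
/-- Squared Frobenius norm. -/
def frobSq {m n : Type*} [Fintype m] [Fintype n] (A : Matrix m n ℝ) : ℝ := ∑ i, ∑ j, (A i j)^2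
/-- Frobenius norm. -/
def frob {m n : Type*} [Fintype m] [Fintype n] (A : Matrix m n ℝ) : ℝ := Real.sqrt (frobSq A)
/-- Spectral (operator) norm. -/
def specNorm {m n : Type*} [Fintype m] [Fintype n] [DecidableEq n] (A : Matrix m n ℝ) : ℝ :=
  ‖LinearMap.toContinuousLinearMap (Matrix.toEuclideanLin A)‖
/-- Moore-Penrose pseudoinverse, via the four Penrose conditions. -/
def IsPinv {m n : Type*} [Fintype m] [Fintype n] (M : Matrix m n ℝ) (P : Matrix n m ℝ) : Prop :=
  M * P * M = M ∧ P * M * P = P ∧ (M * P)ᵀ = M * P ∧ (P * M)ᵀ = P * M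

open scoped Matrix.Norms.L2Operator

section AuxLemmas

variable {p q s : Type*} [Fintype p] [Fintype q] [Fintype s]

lemma frobSq_nonneg' (A : Matrix p q ℝ) : 0 ≤ frobSq A :=
  Finset.sum_nonneg fun _ _ => Finset.sum_nonneg fun _ _ => sq_nonneg _

lemma frob_nonneg' (A : Matrix p q ℝ) : 0 ≤ frob A := Real.sqrt_nonneg _

lemma frob_eq_norm' (A : Matrix p q ℝ) :
    frob A = ‖((WithLp.equiv 2 ((p × q) → ℝ)).symm fun x => A x.1 x.2 : EuclideanSpace ℝ (p × q))‖ := by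
  rw [EuclideanSpace.norm_eq, frob, frobSq]
  congr 1
  rw [Fintype.sum_prod_type]
  simp [sq_abs]

lemma frob_add_le' (A B : Matrix p q ℝ) : frob (A + B) ≤ frob A + frob B := by
  rw [frob_eq_norm', frob_eq_norm', frob_eq_norm']
  have := norm_add_le ((WithLp.equiv 2 ((p × q) → ℝ)).symm fun x => A x.1 x.2 : EuclideanSpace ℝ (p × q))
    ((WithLp.equiv 2 ((p × q) → ℝ)).symm fun x => B x.1 x.2 : EuclideanSpace ℝ (p × q))
  convert this using 2 <;> rfl

lemma frob_neg' (A : Matrix p q ℝ) : frob (-A) = frob A := by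
  unfold frob frobSq; simp

lemma frob_sub_le' (A B : Matrix p q ℝ) : frob (A - B) ≤ frob A + frob B := by
  rw [sub_eq_add_neg]
  simpa [frob_neg'] using frob_add_le' A (-B)

lemma frobSq_eq_trace' (A : Matrix p q ℝ) : frobSq A = Matrix.trace (A * Aᵀ) := by
  simp [Matrix.trace, Matrix.mul_apply, frobSq, sq, Matrix.diag]

lemma frob_mul_orth' (M : Matrix p q ℝ) (V : Matrix s q ℝ) (hMV : M * Vᵀ * V = M) :
    frob (M * Vᵀ) = frob M := by
  unfold frob
  congr 1
  rw [frobSq_eq_trace', frobSq_eq_trace', Matrix.transpose_mul, Matrix.transpose_transpose,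
    ← Matrix.mul_assoc, hMV]

lemma euc_norm_sq' (v : q → ℝ) :
    ‖((WithLp.equiv 2 (q → ℝ)).symm v : EuclideanSpace ℝ q)‖ ^ 2 = ∑ j, (v j)^2 := by
  rw [EuclideanSpace.norm_eq, Real.sq_sqrt (Finset.sum_nonneg fun _ _ => sq_nonneg _)]
  simp [sq_abs]

lemma frob_mul_le' [DecidableEq q] [DecidableEq s] (X : Matrix p q ℝ) (N : Matrix q s ℝ) :
    frob (X * N) ≤ frob X * ‖Nᵀ‖ := by
  have key : frobSq (X * N) ≤ ‖Nᵀ‖^2 * frobSq X := by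
    rw [frobSq, frobSq, Finset.mul_sum]
    refine Finset.sum_le_sum fun i _ => ?_
    have hrow : (fun j => (X * N) i j) = Nᵀ *ᵥ (X i) := by
      ext j; simp [Matrix.mul_apply, Matrix.mulVec, dotProduct, mul_comm]
    have h1 : ∑ j, ((X * N) i j)^2
        = ‖((WithLp.equiv 2 (s → ℝ)).symm (Nᵀ *ᵥ (X i)) : EuclideanSpace ℝ s)‖^2 := by
      rw [euc_norm_sq', ← hrow]
    have h2 : ∑ j, (X i j)^2
        = ‖((WithLp.equiv 2 (q → ℝ)).symm (X i) : EuclideanSpace ℝ q)‖^2 := (euc_norm_sq' _).symm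
    rw [h1, h2]
    have hb := Matrix.l2_opNorm_mulVec Nᵀ ((WithLp.equiv 2 (q → ℝ)).symm (X i))
    calc ‖((WithLp.equiv 2 (s → ℝ)).symm (Nᵀ *ᵥ (X i)) : EuclideanSpace ℝ s)‖^2
        ≤ (‖Nᵀ‖ * ‖((WithLp.equiv 2 (q → ℝ)).symm (X i) : EuclideanSpace ℝ q)‖)^2 := by
          apply sq_le_sq' <;> [skip; exact hb] <;>
            nlinarith [norm_nonneg ((WithLp.equiv 2 (s → ℝ)).symm (Nᵀ *ᵥ (X i)) : EuclideanSpace ℝ s),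
              mul_nonneg (norm_nonneg Nᵀ) (norm_nonneg ((WithLp.equiv 2 (q → ℝ)).symm (X i) : EuclideanSpace ℝ q))]
      _ = ‖Nᵀ‖^2 * ‖((WithLp.equiv 2 (q → ℝ)).symm (X i) : EuclideanSpace ℝ q)‖^2 := by ring
  calc frob (X * N) = Real.sqrt (frobSq (X * N)) := rfl
    _ ≤ Real.sqrt (‖Nᵀ‖^2 * frobSq X) := Real.sqrt_le_sqrt key
    _ = ‖Nᵀ‖ * Real.sqrt (frobSq X) := by
        rw [Real.sqrt_mul (sq_nonneg _), Real.sqrt_sq (norm_nonneg _)]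
    _ = frob X * ‖Nᵀ‖ := mul_comm _ _

lemma l2_norm_transpose' [DecidableEq p] [DecidableEq q] (A : Matrix p q ℝ) : ‖Aᵀ‖ = ‖A‖ := by
  rw [← conjTranspose_eq_transpose_of_trivial]; exact Matrix.l2_opNorm_conjTranspose A

lemma pinv_unique' {M : Matrix p q ℝ} {P Q : Matrix q p ℝ}
    (hP : IsPinv M P) (hQ : IsPinv M Q) : P = Q := by
  obtain ⟨hp1, hp2, hp3, hp4⟩ := hP
  obtain ⟨hq1, hq2, hq3, hq4⟩ := hQ
  have hMP : M * P = M * Q := by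
    calc M * P = (M * Q * M) * P := by rw [hq1]
      _ = (M * Q) * (M * P) := by rw [Matrix.mul_assoc]
      _ = (M * Q)ᵀ * (M * P)ᵀ := by rw [hq3, hp3]
      _ = Qᵀ * (Mᵀ * (Pᵀ * Mᵀ)) := by
          rw [Matrix.transpose_mul M Q, Matrix.transpose_mul M P, Matrix.mul_assoc]
      _ = Qᵀ * (M * P * M)ᵀ := by
          rw [Matrix.transpose_mul (M * P) M, Matrix.transpose_mul M P]
      _ = Qᵀ * Mᵀ := by rw [hp1]
      _ = (M * Q)ᵀ := (Matrix.transpose_mul M Q).symm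
      _ = M * Q := hq3
  have hPM : P * M = Q * M := by
    calc P * M = P * (M * Q * M) := by rw [hq1]
      _ = (P * M) * (Q * M) := by simp only [Matrix.mul_assoc]
      _ = (P * M)ᵀ * (Q * M)ᵀ := by rw [hq4, hp4]
      _ = Mᵀ * Pᵀ * (Mᵀ * Qᵀ) := by rw [Matrix.transpose_mul P M, Matrix.transpose_mul Q M]
      _ = (M * P * M)ᵀ * Qᵀ := by
          rw [Matrix.transpose_mul (M * P) M, Matrix.transpose_mul M P, Matrix.mul_assoc,
            Matrix.mul_assoc, Matrix.mul_assoc]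
      _ = Mᵀ * Qᵀ := by rw [hp1]
      _ = (Q * M)ᵀ := (Matrix.transpose_mul Q M).symm
      _ = Q * M := hq4
  calc P = P * M * P := hp2.symm
    _ = Q * M * P := by rw [hPM]
    _ = Q * (M * P) := Matrix.mul_assoc _ _ _
    _ = Q * (M * Q) := by rw [hMP]
    _ = Q * M * Q := (Matrix.mul_assoc _ _ _).symm
    _ = Q := hq2

end AuxLemmas

set_option maxHeartbeats 2000000 in
/-- Deterministic relative-error bound for subsampled regression. -/
theorem subsampled_regression_relative_error (m r n c k : ℕ)
    (A : Matrix (Fin m) (Fin n) ℝ)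
    (B : Matrix (Fin r) (Fin n) ℝ)
    (U : Matrix (Fin r) (Fin k) ℝ) (hU : Uᵀ * U = 1)
    (V : Matrix (Fin n) (Fin k) ℝ) (hV : Vᵀ * V = 1)
    (d : Fin k → ℝ) (hd : ∀ i, 0 < d i)
    (hB : B = U * Matrix.diagonal d * Vᵀ)
    (S : Matrix (Fin n) (Fin c) ℝ)
    (PBS : Matrix (Fin c) (Fin r) ℝ) (hPBS : IsPinv (B * S) PBS)
    (PB : Matrix (Fin n) (Fin r) ℝ) (hPB : IsPinv B PB)
    (ε₁ c₁ c₂ : ℝ) (hε0 : 0 < ε₁) (hε1 : ε₁ < 1)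
    (h1 : specNorm ((1 : Matrix (Fin k) (Fin k) ℝ) - (Vᵀ * S) * (Sᵀ * V)) ≤ ε₁ / 2)
    (h2 : frob (A * ((1 : Matrix (Fin n) (Fin n) ℝ) - V * Vᵀ) * S)
            ≤ c₁ * frob (A * ((1 : Matrix (Fin n) (Fin n) ℝ) - V * Vᵀ)))
    (h3 : frob (A * ((1 : Matrix (Fin n) (Fin n) ℝ) - V * Vᵀ) * (V - S * Sᵀ * V))
            ≤ c₂ * frob (A * ((1 : Matrix (Fin n) (Fin n) ℝ) - V * Vᵀ))) :
    frob (A - A * S * PBS * B)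
      ≤ (1 + c₁ * ε₁ / Real.sqrt 2 + c₂) * frob (A - A * PB * B) := by
  haveI : CompleteSpace (Matrix (Fin k) (Fin k) ℝ) := FiniteDimensional.complete ℝ _
  set D : Matrix (Fin k) (Fin k) ℝ := Matrix.diagonal d with hD
  set Di : Matrix (Fin k) (Fin k) ℝ := Matrix.diagonal (fun i => (d i)⁻¹) with hDi
  set W : Matrix (Fin k) (Fin c) ℝ := Vᵀ * S with hW
  have hWT : Wᵀ = Sᵀ * V := by rw [hW, Matrix.transpose_mul, Matrix.transpose_transpose]
  -- rewrite h1 as a norm bound on E := 1 - W * Wᵀ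
  rw [← hWT] at h1
  have hE : ‖(1 : Matrix (Fin k) (Fin k) ℝ) - W * Wᵀ‖ ≤ ε₁ / 2 := h1
  have hE1 : ‖(1 : Matrix (Fin k) (Fin k) ℝ) - W * Wᵀ‖ < 1 := by linarith
  set E : Matrix (Fin k) (Fin k) ℝ := 1 - W * Wᵀ with hEd
  -- the inverse of W * Wᵀ
  set u : (Matrix (Fin k) (Fin k) ℝ)ˣ := Units.oneSub E hE1 with hu
  have huval : (u : Matrix (Fin k) (Fin k) ℝ) = W * Wᵀ := by
    show (1 : Matrix (Fin k) (Fin k) ℝ) - E = W * Wᵀ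
    rw [hEd]; abel
  set G : Matrix (Fin k) (Fin k) ℝ := ((u⁻¹ : (Matrix (Fin k) (Fin k) ℝ)ˣ) : Matrix (Fin k) (Fin k) ℝ) with hG
  have hWWG : (W * Wᵀ) * G = 1 := by rw [← huval]; exact u.mul_inv
  have hGWW : G * (W * Wᵀ) = 1 := by rw [← huval]; exact u.inv_mul
  have hGT : Gᵀ = G := by
    have hWWT : (W * Wᵀ)ᵀ = W * Wᵀ := by rw [Matrix.transpose_mul, Matrix.transpose_transpose]
    have h1' : Gᵀ * (W * Wᵀ) = 1 := by
      rw [← hWWT, ← Matrix.transpose_mul, hWWG, Matrix.transpose_one]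
    calc Gᵀ = Gᵀ * ((W * Wᵀ) * G) := by rw [hWWG, Matrix.mul_one]
      _ = (Gᵀ * (W * Wᵀ)) * G := (Matrix.mul_assoc _ _ _).symm
      _ = G := by rw [h1', Matrix.one_mul]
  -- norm bound on G
  have hnorm1 : ‖(1 : Matrix (Fin k) (Fin k) ℝ)‖ ≤ 1 := by
    rw [Matrix.cstar_norm_def, _root_.map_one]; exact ContinuousLinearMap.norm_id_le
  have hGE : G - 1 = G * E := by
    have : G * (W * Wᵀ) = 1 := hGWW
    rw [hEd, Matrix.mul_sub, Matrix.mul_one, this]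
  have hEG : E * G = G - 1 := by
    have : (W * Wᵀ) * G = 1 := hWWG
    rw [hEd, Matrix.sub_mul, Matrix.one_mul, this]
  have hGrepr : G = 1 + E * G := by rw [hEG]; abel
  have hGn : ‖G‖ ≤ 2 := by
    have hle : ‖G‖ ≤ 1 + ‖E‖ * ‖G‖ := by
      calc ‖G‖ = ‖1 + E * G‖ := by rw [← hGrepr]
        _ ≤ ‖(1 : Matrix (Fin k) (Fin k) ℝ)‖ + ‖E * G‖ := norm_add_le _ _
        _ ≤ 1 + ‖E‖ * ‖G‖ := add_le_add hnorm1 (norm_mul_le _ _)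
    nlinarith [norm_nonneg G, norm_nonneg E, hE, hε1]
  -- the key spectral bound
  set N : Matrix (Fin c) (Fin k) ℝ := Wᵀ * (G - 1) with hN
  have hNtN : Nᵀ * N = E * (G * E) := by
    have e0 : Nᵀ = (G - 1) * W := by
      rw [hN, Matrix.transpose_mul, Matrix.transpose_sub, Matrix.transpose_one, hGT,
        Matrix.transpose_transpose]
    have e2 : (G - 1) * (W * Wᵀ) = E := by
      rw [Matrix.sub_mul, hGWW, Matrix.one_mul, hEd]
    calc Nᵀ * N = ((G - 1) * W) * (Wᵀ * (G - 1)) := by rw [e0, hN]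
      _ = ((G - 1) * (W * Wᵀ)) * (G - 1) := by simp only [Matrix.mul_assoc]
      _ = E * (G - 1) := by rw [e2]
      _ = E * (G * E) := by rw [hGE]
  have hNn : ‖N‖ ≤ ε₁ / Real.sqrt 2 := by
    have hsq : ‖N‖ * ‖N‖ ≤ ε₁^2 / 2 := by
      have := Matrix.l2_opNorm_conjTranspose_mul_self N
      rw [conjTranspose_eq_transpose_of_trivial, hNtN] at this
      have hb : ‖E * (G * E)‖ ≤ ‖E‖ * (‖G‖ * ‖E‖) :=
        le_trans (norm_mul_le _ _) (by
          have := norm_mul_le G E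
          nlinarith [norm_nonneg E, norm_nonneg G, norm_nonneg (G * E)])
      have hg2 : ‖G‖ * ‖E‖ ≤ 2 * (ε₁ / 2) :=
        mul_le_mul hGn hE (norm_nonneg _) (by norm_num)
      have h4 : ‖E‖ * (‖G‖ * ‖E‖) ≤ (ε₁ / 2) * (2 * (ε₁ / 2)) :=
        mul_le_mul hE hg2 (mul_nonneg (norm_nonneg _) (norm_nonneg _)) (by linarith)
      have h5 : (ε₁ / 2) * (2 * (ε₁ / 2)) = ε₁^2 / 2 := by ring
      linarith
    have hs2 : Real.sqrt 2 ^ 2 = 2 := Real.sq_sqrt (by norm_num)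
    have hs0 : (0:ℝ) < Real.sqrt 2 := Real.sqrt_pos.2 (by norm_num)
    rw [le_div_iff₀ hs0]
    nlinarith [sq_nonneg (‖N‖ * Real.sqrt 2 - ε₁), norm_nonneg N, hε0]
  have hNTn : ‖Nᵀ‖ ≤ ε₁ / Real.sqrt 2 := by rw [l2_norm_transpose']; exact hNn
  -- diagonal inverses
  have hDDi : ∀ (γ : Type) (X : Matrix (Fin k) γ ℝ), D * (Di * X) = X := by
    intro γ X
    rw [← Matrix.mul_assoc, hD, hDi, Matrix.diagonal_mul_diagonal]
    rw [show (fun i => d i * (d i)⁻¹) = fun _ => (1:ℝ) from funext fun i => mul_inv_cancel₀ (hd i).ne',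
      Matrix.diagonal_one, Matrix.one_mul]
  have hDiD : ∀ (γ : Type) (X : Matrix (Fin k) γ ℝ), Di * (D * X) = X := by
    intro γ X
    rw [← Matrix.mul_assoc, hD, hDi, Matrix.diagonal_mul_diagonal]
    rw [show (fun i => (d i)⁻¹ * d i) = fun _ => (1:ℝ) from funext fun i => inv_mul_cancel₀ (hd i).ne',
      Matrix.diagonal_one, Matrix.one_mul]
  have hUU : ∀ (γ : Type) (X : Matrix (Fin k) γ ℝ), Uᵀ * (U * X) = X := by
    intro γ X; rw [← Matrix.mul_assoc, hU, Matrix.one_mul]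
  have hWWG' : ∀ (γ : Type) (X : Matrix (Fin k) γ ℝ), W * (Wᵀ * (G * X)) = X := by
    intro γ X
    rw [← Matrix.mul_assoc, ← Matrix.mul_assoc, hWWG, Matrix.one_mul]
  -- identification of the pseudoinverses
  have hBS : B * S = U * D * W := by rw [hB, hW, Matrix.mul_assoc (U * D)]
  set Q : Matrix (Fin c) (Fin r) ℝ := Wᵀ * G * Di * Uᵀ with hQ
  have hMQ : (U * D * W) * Q = U * Uᵀ := by
    rw [hQ]
    simp only [Matrix.mul_assoc]
    rw [hWWG' _ (Di * Uᵀ), hDDi _ Uᵀ]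
  have hQM : Q * (U * D * W) = Wᵀ * (G * W) := by
    rw [hQ]
    simp only [Matrix.mul_assoc]
    rw [hUU _ (D * W), hDiD _ W]
  have hQpinv : IsPinv (U * D * W) Q := by
    refine ⟨?_, ?_, ?_, ?_⟩
    · rw [hMQ, Matrix.mul_assoc U Uᵀ _]
      rw [show Uᵀ * (U * D * W) = D * W by simp only [Matrix.mul_assoc]; rw [hUU _ (D * W)]]
      simp only [Matrix.mul_assoc]
    · rw [hQM, hQ]
      simp only [Matrix.mul_assoc]
      rw [hWWG' _ (Di * Uᵀ)]
    · rw [hMQ, Matrix.transpose_mul, Matrix.transpose_transpose]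
    · rw [hQM, Matrix.transpose_mul, Matrix.transpose_mul, Matrix.transpose_transpose, hGT,
        Matrix.mul_assoc]
  have hPBSQ : PBS = Q := pinv_unique' hPBS (hBS ▸ hQpinv)
  -- identification of PB
  set R : Matrix (Fin n) (Fin r) ℝ := V * Di * Uᵀ with hR
  have hMR : (U * D * Vᵀ) * R = U * Uᵀ := by
    rw [hR]
    simp only [Matrix.mul_assoc]
    rw [show Vᵀ * (V * (Di * Uᵀ)) = Di * Uᵀ by rw [← Matrix.mul_assoc, hV, Matrix.one_mul],
      hDDi _ Uᵀ]
  have hRM : R * (U * D * Vᵀ) = V * Vᵀ := by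
    rw [hR]
    simp only [Matrix.mul_assoc]
    rw [hUU _ (D * Vᵀ), hDiD _ Vᵀ]
  have hRpinv : IsPinv (U * D * Vᵀ) R := by
    refine ⟨?_, ?_, ?_, ?_⟩
    · rw [hMR, Matrix.mul_assoc U Uᵀ _]
      rw [show Uᵀ * (U * D * Vᵀ) = D * Vᵀ by simp only [Matrix.mul_assoc]; rw [hUU _ (D * Vᵀ)]]
      simp only [Matrix.mul_assoc]
    · rw [hRM, hR]
      simp only [Matrix.mul_assoc]
      rw [show Vᵀ * (V * (Di * Uᵀ)) = Di * Uᵀ by rw [← Matrix.mul_assoc, hV, Matrix.one_mul]]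
    · rw [hMR, Matrix.transpose_mul, Matrix.transpose_transpose]
    · rw [hRM, Matrix.transpose_mul, Matrix.transpose_transpose]
  have hPBR : PB = R := pinv_unique' hPB (hB ▸ hRpinv)
  -- the projection matrix
  set AP : Matrix (Fin m) (Fin n) ℝ := A * ((1 : Matrix (Fin n) (Fin n) ℝ) - V * Vᵀ) with hAP
  have hAPeq : AP = A - A * (V * Vᵀ) := by rw [hAP, Matrix.mul_sub, Matrix.mul_one]
  have hAPV : AP * V = 0 := by
    rw [hAPeq, Matrix.sub_mul, Matrix.mul_assoc, Matrix.mul_assoc, hV, Matrix.mul_one, sub_self]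
  -- A - A * PB * B = AP
  have hden : A - A * PB * B = AP := by
    rw [hPBR, hR, hB, hAPeq]
    congr 1
    simp only [Matrix.mul_assoc]
    rw [hUU _ (D * Vᵀ), hDiD _ Vᵀ]
  -- A - A * S * PBS * B = AP - (AP * S) * (Wᵀ * G) * Vᵀ
  have hkey : A - A * S * PBS * B = AP - ((AP * S) * (Wᵀ * G)) * Vᵀ := by
    rw [hPBSQ, hQ, hB, hAPeq]
    have ht1 : A * S * (Wᵀ * G * Di * Uᵀ) * (U * D * Vᵀ) = A * (S * (Wᵀ * (G * Vᵀ))) := by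
      simp only [Matrix.mul_assoc]
      rw [hUU _ (D * Vᵀ), hDiD _ Vᵀ]
    have ht2 : ((A - A * (V * Vᵀ)) * S) * (Wᵀ * G) * Vᵀ
        = A * (S * (Wᵀ * (G * Vᵀ))) - A * (V * Vᵀ) := by
      rw [Matrix.sub_mul, Matrix.sub_mul, Matrix.sub_mul]
      congr 1
      · simp only [Matrix.mul_assoc]
      · -- A * (V * Vᵀ) * S * (Wᵀ * G) * Vᵀ = A * (V * Vᵀ)
        simp only [Matrix.mul_assoc]
        rw [← Matrix.mul_assoc Vᵀ S, ← hW, hWWG' _ Vᵀ]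
    rw [ht1, ht2]
    abel
  rw [hkey, hden]
  -- now the norm estimates
  set T1 : Matrix (Fin m) (Fin k) ℝ := (AP * S) * Wᵀ with hT1
  set T2 : Matrix (Fin m) (Fin k) ℝ := (AP * S) * N with hT2
  have hsplit : (AP * S) * (Wᵀ * G) = T1 + T2 := by
    rw [hT1, hT2, hN, ← Matrix.mul_add]
    congr 1
    rw [Matrix.mul_sub, Matrix.mul_one]
    abel
  have hT1b : frob T1 ≤ c₂ * frob AP := by
    have e1 : T1 = -(AP * (V - S * Sᵀ * V)) := by
      rw [hT1, hWT, Matrix.mul_sub, hAPV]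
      simp only [Matrix.mul_assoc]
      abel
    have e2 : AP * (V - S * Sᵀ * V) = A * ((1 : Matrix (Fin n) (Fin n) ℝ) - V * Vᵀ) * (V - S * Sᵀ * V) := by
      rw [hAP]
    rw [e1, frob_neg', e2]
    exact h3
  have hT2b : frob T2 ≤ c₁ * frob AP * (ε₁ / Real.sqrt 2) := by
    have e1 : frob T2 ≤ frob (AP * S) * ‖Nᵀ‖ := frob_mul_le' _ _
    have e2 : frob (AP * S) * ‖Nᵀ‖ ≤ (c₁ * frob AP) * (ε₁ / Real.sqrt 2) := by
      apply mul_le_mul h2 hNTn (norm_nonneg _) (le_trans (frob_nonneg' _) h2)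
    linarith
  have hZ : frob (((AP * S) * (Wᵀ * G)) * Vᵀ) = frob ((AP * S) * (Wᵀ * G)) := by
    refine frob_mul_orth' _ V ?_
    rw [Matrix.mul_assoc _ Vᵀ V, hV, Matrix.mul_one]
  have hmain : frob (AP - ((AP * S) * (Wᵀ * G)) * Vᵀ)
      ≤ frob AP + (frob T1 + frob T2) := by
    calc frob (AP - ((AP * S) * (Wᵀ * G)) * Vᵀ)
        ≤ frob AP + frob (((AP * S) * (Wᵀ * G)) * Vᵀ) := frob_sub_le' _ _
      _ = frob AP + frob ((AP * S) * (Wᵀ * G)) := by rw [hZ]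
      _ = frob AP + frob (T1 + T2) := by rw [hsplit]
      _ ≤ frob AP + (frob T1 + frob T2) := by linarith [frob_add_le' T1 T2]
  have hring : c₁ * frob AP * (ε₁ / Real.sqrt 2) = c₁ * ε₁ / Real.sqrt 2 * frob AP := by
    ring
  linarith [hmain, hT1b, hT2b, frob_nonneg' AP]
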